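/- arXiv:2311.04688 — 2 statements merged into one kernel-verified Lean document; each statement's English description precedes it below -/
import Mathlib

section
/- Let C_1, C_2 be ideals of ℤ_{p^a}[x]/⟨x^n−1⟩ and ℤ_{q^b}[x]/⟨x^n−1⟩ for distinct primes p, q. If C_1 is a free ℤ_{p^a}-module of rank r_1 and C_2 is a free ℤ_{q^b}-module of rank r_2 with r_1 ≠ r_2, then the CRT code CRT(C_1, C_2) ⊆ ℤ_{p^a q^b}[x]/⟨x^n−1⟩ is not a free ℤ_{p^a q^b}-module. -/
open Polynomial

/-- Coefficientwise reduction `ℤ_m[x]/⟨x^n - 1⟩ → ℤ_k[x]/⟨x^n - 1⟩` for `k ∣ m`. -/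
noncomputable def redQuot (m k n : ℕ) (h : k ∣ m) :
    (Polynomial (ZMod m) ⧸ (Ideal.span {(X : Polynomial (ZMod m)) ^ n - 1})) →+*
    (Polynomial (ZMod k) ⧸ (Ideal.span {(X : Polynomial (ZMod k)) ^ n - 1})) :=
  Ideal.Quotient.lift _
    ((Ideal.Quotient.mk _).comp (Polynomial.mapRingHom (ZMod.castHom h (ZMod k))))
    (fun a ha => by
      rw [Ideal.mem_span_singleton] at ha
      obtain ⟨c, rfl⟩ := ha
      simp only [RingHom.comp_apply, Polynomial.coe_mapRingHom, Polynomial.map_mul,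
        Polynomial.map_sub, Polynomial.map_pow, Polynomial.map_X, Polynomial.map_one]
      rw [Ideal.Quotient.eq_zero_iff_mem, Ideal.mem_span_singleton]
      exact dvd_mul_right _ _)

lemma redQuot_mk (m k n : ℕ) (h : k ∣ m) (f : Polynomial (ZMod m)) :
    redQuot m k n h (Ideal.Quotient.mk _ f)
      = Ideal.Quotient.mk _ (f.map (ZMod.castHom h (ZMod k))) := rfl

lemma mk_C_mul {R : Type} [CommRing R] (I : Ideal (Polynomial R)) (c : R) (f : Polynomial R) :
    Ideal.Quotient.mk I (C c * f) = c • Ideal.Quotient.mk I f := by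
  rw [← smul_eq_C_mul, ← Ideal.Quotient.mkₐ_eq_mk R, map_smul]

lemma redQuot_smul (m k n : ℕ) (h : k ∣ m) (c : ZMod m)
    (z : Polynomial (ZMod m) ⧸ (Ideal.span {(X : Polynomial (ZMod m)) ^ n - 1})) :
    redQuot m k n h (c • z) = ZMod.castHom h (ZMod k) c • redQuot m k n h z := by
  obtain ⟨f, rfl⟩ := Ideal.Quotient.mk_surjective z
  rw [← mk_C_mul, redQuot_mk, redQuot_mk, Polynomial.map_mul, map_C, mk_C_mul]

lemma castHom_surj (m k : ℕ) (h : k ∣ m) [NeZero k] :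
    Function.Surjective (ZMod.castHom h (ZMod k)) := fun y =>
  ⟨(y.val : ZMod m), by rw [map_natCast, ZMod.natCast_zmod_val]⟩

noncomputable def liftPoly (m k : ℕ) (f : Polynomial (ZMod k)) : Polynomial (ZMod m) :=
  f.sum fun j c => Polynomial.monomial j ((c.val : ZMod m))

lemma map_liftPoly (m k : ℕ) (h : k ∣ m) [NeZero k] (f : Polynomial (ZMod k)) :
    (liftPoly m k f).map (ZMod.castHom h (ZMod k)) = f := by
  unfold liftPoly
  rw [Polynomial.sum_def, Polynomial.map_sum]
  simp only [Polynomial.map_monomial, map_natCast, ZMod.natCast_zmod_val]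
  rw [← Polynomial.sum_def, Polynomial.sum_monomial_eq]

section scalars
variable {p q a b : ℕ}

lemma exists_idem_crt (hp : p.Prime) (hq : q.Prime) (hpq : p ≠ q) :
    ∃ e₁ e₂ : ZMod (p ^ a * q ^ b),
      ZMod.castHom (dvd_mul_right (p ^ a) (q ^ b)) (ZMod (p ^ a)) e₁ = 1 ∧
      ZMod.castHom (dvd_mul_left (q ^ b) (p ^ a)) (ZMod (q ^ b)) e₁ = 0 ∧
      ZMod.castHom (dvd_mul_right (p ^ a) (q ^ b)) (ZMod (p ^ a)) e₂ = 0 ∧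
      ZMod.castHom (dvd_mul_left (q ^ b) (p ^ a)) (ZMod (q ^ b)) e₂ = 1 ∧
      e₁ + e₂ = 1 := by
  have hco : Nat.Coprime (p ^ a) (q ^ b) :=
    Nat.Coprime.pow a b ((Nat.coprime_primes hp hq).mpr hpq)
  obtain ⟨u, v, huv⟩ := Nat.isCoprime_iff_coprime.mpr hco
  have h0p : ((p ^ a : ℕ) : ZMod (p ^ a)) = 0 := ZMod.natCast_self _
  have h0q : ((q ^ b : ℕ) : ZMod (q ^ b)) = 0 := ZMod.natCast_self _
  refine ⟨(v : ZMod _) * ((q ^ b : ℕ) : ZMod _), (u : ZMod _) * ((p ^ a : ℕ) : ZMod _),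
    ?_, ?_, ?_, ?_, ?_⟩
  · rw [map_mul, map_intCast, map_natCast]
    have h1 := congrArg (fun z : ℤ => (z : ZMod (p ^ a))) huv
    push_cast at h1 ⊢
    push_cast at h0p
    linear_combination h1 - (u : ZMod (p ^ a)) * h0p
  · rw [map_mul, map_natCast, h0q, mul_zero]
  · rw [map_mul, map_natCast, h0p, mul_zero]
  · rw [map_mul, map_intCast, map_natCast]
    have h1 := congrArg (fun z : ℤ => (z : ZMod (q ^ b))) huv
    push_cast at h1 ⊢
    push_cast at h0q
    linear_combination h1 - (v : ZMod (q ^ b)) * h0q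
  · have h1 := congrArg (fun z : ℤ => (z : ZMod (p ^ a * q ^ b))) huv
    push_cast at h1 ⊢
    linear_combination h1

lemma scalar_inj (hp : p.Prime) (hq : q.Prime) (hpq : p ≠ q) (r : ZMod (p ^ a * q ^ b))
    (h1 : ZMod.castHom (dvd_mul_right (p ^ a) (q ^ b)) (ZMod (p ^ a)) r = 0)
    (h2 : ZMod.castHom (dvd_mul_left (q ^ b) (p ^ a)) (ZMod (q ^ b)) r = 0) :
    r = 0 := by
  have hco : Nat.Coprime (p ^ a) (q ^ b) :=
    Nat.Coprime.pow a b ((Nat.coprime_primes hp hq).mpr hpq)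
  haveI : NeZero (p ^ a) := ⟨(pow_pos hp.pos a).ne'⟩
  haveI : NeZero (q ^ b) := ⟨(pow_pos hq.pos b).ne'⟩
  haveI : NeZero (p ^ a * q ^ b) := ⟨(Nat.mul_pos (pow_pos hp.pos a) (pow_pos hq.pos b)).ne'⟩
  have e1 : ((r.val : ℕ) : ZMod (p ^ a)) = 0 := by
    rw [← map_natCast (ZMod.castHom (dvd_mul_right (p ^ a) (q ^ b)) (ZMod (p ^ a))),
      ZMod.natCast_zmod_val]
    exact h1
  have e2 : ((r.val : ℕ) : ZMod (q ^ b)) = 0 := by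
    rw [← map_natCast (ZMod.castHom (dvd_mul_left (q ^ b) (p ^ a)) (ZMod (q ^ b))),
      ZMod.natCast_zmod_val]
    exact h2
  rw [ZMod.natCast_eq_zero_iff] at e1 e2
  have hd : (p ^ a * q ^ b) ∣ r.val := Nat.Coprime.mul_dvd_of_dvd_of_dvd hco e1 e2
  have hr : ((r.val : ℕ) : ZMod (p ^ a * q ^ b)) = 0 :=
    (ZMod.natCast_eq_zero_iff _ _).mpr hd
  rwa [ZMod.natCast_zmod_val] at hr

end scalars
section quot
variable {p q a b : ℕ} (n : ℕ)

lemma quot_inj (hp : p.Prime) (hq : q.Prime) (hpq : p ≠ q)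
    (z : Polynomial (ZMod (p ^ a * q ^ b)) ⧸
      (Ideal.span {(X : Polynomial (ZMod (p ^ a * q ^ b))) ^ n - 1}))
    (h1 : redQuot (p ^ a * q ^ b) (p ^ a) n (dvd_mul_right _ _) z = 0)
    (h2 : redQuot (p ^ a * q ^ b) (q ^ b) n (dvd_mul_left _ _) z = 0) :
    z = 0 := by
  haveI : NeZero (p ^ a) := ⟨(pow_pos hp.pos a).ne'⟩
  haveI : NeZero (q ^ b) := ⟨(pow_pos hq.pos b).ne'⟩
  obtain ⟨e₁, e₂, he1p, he1q, he2p, he2q, hsum⟩ := exists_idem_crt (a := a) (b := b) hp hq hpq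
  obtain ⟨f, rfl⟩ := Ideal.Quotient.mk_surjective z
  rw [redQuot_mk, Ideal.Quotient.eq_zero_iff_mem, Ideal.mem_span_singleton] at h1 h2
  obtain ⟨g₁, hg₁⟩ := h1
  obtain ⟨g₂, hg₂⟩ := h2
  obtain ⟨G₁, hG₁⟩ := Polynomial.map_surjective _
    (castHom_surj (p ^ a * q ^ b) (p ^ a) (dvd_mul_right _ _)) g₁
  obtain ⟨G₂, hG₂⟩ := Polynomial.map_surjective _
    (castHom_surj (p ^ a * q ^ b) (q ^ b) (dvd_mul_left _ _)) g₂
  set D₁ := f - (X ^ n - 1) * G₁ with hD₁def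
  set D₂ := f - (X ^ n - 1) * G₂ with hD₂def
  have hD₁ : D₁.map (ZMod.castHom (dvd_mul_right (p ^ a) (q ^ b)) (ZMod (p ^ a))) = 0 := by
    rw [hD₁def, Polynomial.map_sub, Polynomial.map_mul, Polynomial.map_sub, Polynomial.map_pow,
      Polynomial.map_X, Polynomial.map_one, hG₁, ← hg₁, sub_self]
  have hD₂ : D₂.map (ZMod.castHom (dvd_mul_left (q ^ b) (p ^ a)) (ZMod (q ^ b))) = 0 := by
    rw [hD₂def, Polynomial.map_sub, Polynomial.map_mul, Polynomial.map_sub, Polynomial.map_pow,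
      Polynomial.map_X, Polynomial.map_one, hG₂, ← hg₂, sub_self]
  have hz1 : C e₁ * D₁ = 0 := by
    ext j
    rw [coeff_C_mul, coeff_zero]
    refine scalar_inj hp hq hpq _ ?_ ?_
    · have := congrArg (fun P => P.coeff j) hD₁
      simp only [Polynomial.coeff_map, Polynomial.coeff_zero] at this
      rw [map_mul, he1p, this, mul_zero]
    · rw [map_mul, he1q, zero_mul]
  have hz2 : C e₂ * D₂ = 0 := by
    ext j
    rw [coeff_C_mul, coeff_zero]
    refine scalar_inj hp hq hpq _ ?_ ?_
    · rw [map_mul, he2p, zero_mul]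
    · have := congrArg (fun P => P.coeff j) hD₂
      simp only [Polynomial.coeff_map, Polynomial.coeff_zero] at this
      rw [map_mul, he2q, this, mul_zero]
  have hf : f = (X ^ n - 1) * (C e₁ * G₁ + C e₂ * G₂) := by
    have hCsum : (C e₁ + C e₂ : Polynomial (ZMod (p ^ a * q ^ b))) = 1 := by
      rw [← C_add, hsum, C_1]
    calc f = (C e₁ + C e₂) * f := by rw [hCsum, one_mul]
      _ = (X ^ n - 1) * (C e₁ * G₁ + C e₂ * G₂) + (C e₁ * D₁ + C e₂ * D₂) := by
          rw [hD₁def, hD₂def]; ring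
      _ = (X ^ n - 1) * (C e₁ * G₁ + C e₂ * G₂) := by rw [hz1, hz2, add_zero, add_zero]
  rw [Ideal.Quotient.eq_zero_iff_mem, Ideal.mem_span_singleton]
  exact ⟨_, hf⟩

lemma quot_surj (hp : p.Prime) (hq : q.Prime) (hpq : p ≠ q)
    (y₁ : Polynomial (ZMod (p ^ a)) ⧸ (Ideal.span {(X : Polynomial (ZMod (p ^ a))) ^ n - 1}))
    (y₂ : Polynomial (ZMod (q ^ b)) ⧸ (Ideal.span {(X : Polynomial (ZMod (q ^ b))) ^ n - 1})) :
    ∃ z, redQuot (p ^ a * q ^ b) (p ^ a) n (dvd_mul_right _ _) z = y₁ ∧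
      redQuot (p ^ a * q ^ b) (q ^ b) n (dvd_mul_left _ _) z = y₂ := by
  haveI : NeZero (p ^ a) := ⟨(pow_pos hp.pos a).ne'⟩
  haveI : NeZero (q ^ b) := ⟨(pow_pos hq.pos b).ne'⟩
  obtain ⟨e₁, e₂, he1p, he1q, he2p, he2q, hsum⟩ := exists_idem_crt (a := a) (b := b) hp hq hpq
  obtain ⟨f₁, rfl⟩ := Ideal.Quotient.mk_surjective y₁
  obtain ⟨f₂, rfl⟩ := Ideal.Quotient.mk_surjective y₂
  refine ⟨Ideal.Quotient.mk _ (C e₁ * liftPoly (p ^ a * q ^ b) (p ^ a) f₁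
    + C e₂ * liftPoly (p ^ a * q ^ b) (q ^ b) f₂), ?_, ?_⟩
  · rw [redQuot_mk, Polynomial.map_add, Polynomial.map_mul, Polynomial.map_mul, map_C, map_C,
      he1p, he2p, C_1, C_0, one_mul, zero_mul, add_zero,
      map_liftPoly _ _ (dvd_mul_right _ _)]
  · rw [redQuot_mk, Polynomial.map_add, Polynomial.map_mul, Polynomial.map_mul, map_C, map_C,
      he1q, he2q, C_1, C_0, one_mul, zero_mul, zero_add,
      map_liftPoly _ _ (dvd_mul_left _ _)]

end quot
lemma basis_transfer {R Rk M Mk : Type} [CommRing R] [CommRing Rk]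
    [AddCommGroup M] [AddCommGroup Mk] [Module R M] [Module Rk Mk]
    (φ : R →+* Rk) (φs : Function.Surjective φ)
    (F : M →+ Mk) (hsmul : ∀ (c : R) (x : M), F (c • x) = φ c • F x)
    (Fsurj : Function.Surjective F)
    (t : R) (ht : φ t = 0)
    (hker : ∀ x, F x = 0 → ∃ y, x = t • y)
    {ι : Type} (b : Module.Basis ι R M) : Nonempty (Module.Basis ι Rk Mk) := by
  classical
  set s : Rk → R := fun x => if x = 0 then 0 else Function.surjInv φs x with hs
  have hs0 : s 0 = 0 := if_pos rfl
  have hφs : ∀ x, φ (s x) = x := by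
    intro x
    by_cases h : x = 0
    · simp [hs, h]
    · simp [hs, h, Function.surjInv_eq φs]
  set v : ι → Mk := fun i => F (b i) with hv
  have hF_lc : ∀ m : ι →₀ R, F (Finsupp.linearCombination R (b : ι → M) m)
      = Finsupp.linearCombination Rk v (m.mapRange φ (map_zero φ)) := by
    intro m
    rw [Finsupp.linearCombination_apply, Finsupp.linearCombination_apply, map_finsuppSum,
      Finsupp.sum_mapRange_index (by simp)]
    exact Finsupp.sum_congr fun i _ => hsmul _ _
  have hli : LinearIndependent Rk v := by
    rw [linearIndependent_iff]
    intro l hl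
    set m : ι →₀ R := l.mapRange s hs0 with hm
    have hml : m.mapRange φ (map_zero φ) = l := by
      ext i; simp [hm, Finsupp.mapRange_apply, hφs]
    set x : M := b.repr.symm m with hx
    have hxm : b.repr x = m := b.repr.apply_symm_apply m
    have hFx : F x = 0 := by
      have hxe : x = Finsupp.linearCombination R (b : ι → M) m := by
        rw [hx, Module.Basis.repr_symm_apply]
      rw [hxe, hF_lc, hml, hl]
    obtain ⟨y, hy⟩ := hker x hFx
    have hmt : m = t • b.repr y := by rw [← hxm, hy, map_smul]
    ext i
    have hmi : m i = t * b.repr y i := by rw [hmt]; simp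
    calc l i = φ (m i) := by
          conv_lhs => rw [← hml]
          simp [Finsupp.mapRange_apply]
      _ = φ t * φ (b.repr y i) := by rw [hmi, map_mul]
      _ = 0 := by rw [ht, zero_mul]
  have hspan : ⊤ ≤ Submodule.span Rk (Set.range v) := by
    intro z _
    obtain ⟨x, rfl⟩ := Fsurj z
    have hxe : x = Finsupp.linearCombination R (b : ι → M) (b.repr x) :=
      (b.linearCombination_repr x).symm
    rw [hxe, hF_lc, ← Finsupp.range_linearCombination]
    exact LinearMap.mem_range_self _ _
  exact ⟨Module.Basis.mk hli hspan⟩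

lemma finrank_eq_of_basis_pair {R Rk M Mk : Type} [CommRing R] [CommRing Rk]
    [Nontrivial R] [Nontrivial Rk]
    [AddCommGroup M] [AddCommGroup Mk] [Module R M] [Module Rk Mk]
    {ι : Type} (b : Module.Basis ι R M) (c : Module.Basis ι Rk Mk) :
    Module.finrank R M = Module.finrank Rk Mk := by
  rw [Module.finrank, Module.finrank, ← b.mk_eq_rank'', ← c.mk_eq_rank'']

set_option maxHeartbeats 8000000 in
set_option synthInstance.maxHeartbeats 400000 in
/-- if `C₁ ⊆ ℤ_{p^a}[x]/⟨x^n−1⟩` and `C₂ ⊆ ℤ_{q^b}[x]/⟨x^n−1⟩` are ideals that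
are free modules of different ranks `r₁ ≠ r₂`, then `CRT(C₁,C₂)` is not a free
`ℤ_{p^a q^b}`-module. -/
theorem crt_code_not_free (p q n a b r₁ r₂ : ℕ) (hp : p.Prime) (hq : q.Prime) (hpq : p ≠ q)
    (ha : 0 < a) (hb : 0 < b)
    (C₁ : Ideal (Polynomial (ZMod (p ^ a)) ⧸
      (Ideal.span {(X : Polynomial (ZMod (p ^ a))) ^ n - 1})))
    (C₂ : Ideal (Polynomial (ZMod (q ^ b)) ⧸
      (Ideal.span {(X : Polynomial (ZMod (q ^ b))) ^ n - 1})))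
    (hfree₁ : Module.Free (ZMod (p ^ a)) (C₁.restrictScalars (ZMod (p ^ a))))
    (hrank₁ : Module.finrank (ZMod (p ^ a)) (C₁.restrictScalars (ZMod (p ^ a))) = r₁)
    (hfree₂ : Module.Free (ZMod (q ^ b)) (C₂.restrictScalars (ZMod (q ^ b))))
    (hrank₂ : Module.finrank (ZMod (q ^ b)) (C₂.restrictScalars (ZMod (q ^ b))) = r₂)
    (hr : r₁ ≠ r₂)
    (C : Ideal (Polynomial (ZMod (p ^ a * q ^ b)) ⧸
      (Ideal.span {(X : Polynomial (ZMod (p ^ a * q ^ b))) ^ n - 1})))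
    (hC : ∀ x, x ∈ C ↔
      redQuot (p ^ a * q ^ b) (p ^ a) n (dvd_mul_right _ _) x ∈ C₁ ∧
      redQuot (p ^ a * q ^ b) (q ^ b) n (dvd_mul_left _ _) x ∈ C₂) :
    ¬ Module.Free (ZMod (p ^ a * q ^ b)) (C.restrictScalars (ZMod (p ^ a * q ^ b))) := by
  intro hfree
  classical
  haveI : NeZero (p ^ a) := ⟨(pow_pos hp.pos a).ne'⟩
  haveI : NeZero (q ^ b) := ⟨(pow_pos hq.pos b).ne'⟩
  haveI : Fact (1 < p ^ a) := ⟨Nat.one_lt_pow ha.ne' hp.one_lt⟩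
  haveI : Fact (1 < q ^ b) := ⟨Nat.one_lt_pow hb.ne' hq.one_lt⟩
  haveI : Fact (1 < p ^ a * q ^ b) := ⟨lt_of_lt_of_le (Nat.one_lt_pow ha.ne' hp.one_lt)
    (Nat.le_mul_of_pos_right _ (pow_pos hq.pos b))⟩
  haveI := hfree
  have hco : Nat.Coprime (p ^ a) (q ^ b) :=
    Nat.Coprime.pow a b ((Nat.coprime_primes hp hq).mpr hpq)
  set b0 : Module.Basis _ (ZMod (p ^ a * q ^ b)) (C.restrictScalars (ZMod (p ^ a * q ^ b))) :=
    Module.Free.chooseBasis _ _ with hb0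
  -- side q
  set F₂ : (C.restrictScalars (ZMod (p ^ a * q ^ b))) →+ (C₂.restrictScalars (ZMod (q ^ b))) :=
    { toFun := fun x => ⟨redQuot (p ^ a * q ^ b) (q ^ b) n (dvd_mul_left _ _) x.1,
        ((hC x.1).mp x.2).2⟩
      map_zero' := by
        apply Subtype.ext
        simp [map_zero]
      map_add' := by
        intro x y
        apply Subtype.ext
        simp [map_add] } with hF₂
  have hF₂val : ∀ x, (F₂ x).1 = redQuot (p ^ a * q ^ b) (q ^ b) n (dvd_mul_left _ _) x.1 :=
    fun x => rfl
  have hsmul₂ : ∀ (c : ZMod (p ^ a * q ^ b)) (x : C.restrictScalars (ZMod (p ^ a * q ^ b))),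
      F₂ (c • x) = ZMod.castHom (dvd_mul_left (q ^ b) (p ^ a)) (ZMod (q ^ b)) c • F₂ x := by
    intro c x
    apply Subtype.ext
    rw [hF₂val, Submodule.coe_smul, Submodule.coe_smul, redQuot_smul, hF₂val]
  have Fsurj₂ : Function.Surjective F₂ := by
    rintro ⟨y, hy⟩
    obtain ⟨z, hz1, hz2⟩ := quot_surj n hp hq hpq 0 y
    have hzC : z ∈ C := (hC z).mpr ⟨by rw [hz1]; exact C₁.zero_mem, by rw [hz2]; exact hy⟩
    exact ⟨⟨z, hzC⟩, Subtype.ext hz2⟩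
  have hker₂ : ∀ x : (C.restrictScalars (ZMod (p ^ a * q ^ b))),
      F₂ x = 0 → ∃ y, x = ((q ^ b : ℕ) : ZMod (p ^ a * q ^ b)) • y := by
    intro x hx
    have hx0 : redQuot (p ^ a * q ^ b) (q ^ b) n (dvd_mul_left _ _) x.1 = 0 := by
      rw [← hF₂val, hx]; rfl
    set U : (ZMod (p ^ a))ˣ := ZMod.unitOfCoprime (q ^ b) hco.symm with hU
    obtain ⟨z, hz1, hz2⟩ := quot_surj n hp hq hpq
      (((U⁻¹ : (ZMod (p ^ a))ˣ) : ZMod (p ^ a)) •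
        redQuot (p ^ a * q ^ b) (p ^ a) n (dvd_mul_right _ _) x.1) 0
    have hzC : z ∈ C := (hC z).mpr ⟨by
        rw [hz1]
        exact Submodule.smul_mem (C₁.restrictScalars (ZMod (p ^ a))) _ ((hC x.1).mp x.2).1,
      by rw [hz2]; exact C₂.zero_mem⟩
    refine ⟨⟨z, hzC⟩, Subtype.ext ?_⟩
    rw [Submodule.coe_smul]
    have hdiff : x.1 - ((q ^ b : ℕ) : ZMod (p ^ a * q ^ b)) • z = 0 := by
      apply quot_inj n hp hq hpq
      · rw [map_sub, redQuot_smul, hz1, smul_smul, map_natCast,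
          ← ZMod.coe_unitOfCoprime (q ^ b) hco.symm, ← hU, ← Units.val_mul, mul_inv_cancel,
          Units.val_one, one_smul, sub_self]
      · rw [map_sub, redQuot_smul, hz2, smul_zero, hx0, sub_zero]
    exact sub_eq_zero.mp hdiff
  obtain ⟨b₂⟩ := basis_transfer (ZMod.castHom (dvd_mul_left (q ^ b) (p ^ a)) (ZMod (q ^ b)))
    (castHom_surj _ _ _) F₂ hsmul₂ Fsurj₂ _ (by rw [map_natCast, ZMod.natCast_self]) hker₂ b0
  -- side p
  set F₁ : (C.restrictScalars (ZMod (p ^ a * q ^ b))) →+ (C₁.restrictScalars (ZMod (p ^ a))) :=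
    { toFun := fun x => ⟨redQuot (p ^ a * q ^ b) (p ^ a) n (dvd_mul_right _ _) x.1,
        ((hC x.1).mp x.2).1⟩
      map_zero' := by
        apply Subtype.ext
        simp [map_zero]
      map_add' := by
        intro x y
        apply Subtype.ext
        simp [map_add] } with hF₁
  have hF₁val : ∀ x, (F₁ x).1 = redQuot (p ^ a * q ^ b) (p ^ a) n (dvd_mul_right _ _) x.1 :=
    fun x => rfl
  have hsmul₁ : ∀ (c : ZMod (p ^ a * q ^ b)) (x : C.restrictScalars (ZMod (p ^ a * q ^ b))),
      F₁ (c • x) = ZMod.castHom (dvd_mul_right (p ^ a) (q ^ b)) (ZMod (p ^ a)) c • F₁ x := by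
    intro c x
    apply Subtype.ext
    rw [hF₁val, Submodule.coe_smul, Submodule.coe_smul, redQuot_smul, hF₁val]
  have Fsurj₁ : Function.Surjective F₁ := by
    rintro ⟨y, hy⟩
    obtain ⟨z, hz1, hz2⟩ := quot_surj n hp hq hpq y 0
    have hzC : z ∈ C := (hC z).mpr ⟨by rw [hz1]; exact hy, by rw [hz2]; exact C₂.zero_mem⟩
    exact ⟨⟨z, hzC⟩, Subtype.ext hz1⟩
  have hker₁ : ∀ x : (C.restrictScalars (ZMod (p ^ a * q ^ b))),
      F₁ x = 0 → ∃ y, x = ((p ^ a : ℕ) : ZMod (p ^ a * q ^ b)) • y := by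
    intro x hx
    have hx0 : redQuot (p ^ a * q ^ b) (p ^ a) n (dvd_mul_right _ _) x.1 = 0 := by
      rw [← hF₁val, hx]; rfl
    set U : (ZMod (q ^ b))ˣ := ZMod.unitOfCoprime (p ^ a) hco with hU
    obtain ⟨z, hz1, hz2⟩ := quot_surj n hp hq hpq 0
      (((U⁻¹ : (ZMod (q ^ b))ˣ) : ZMod (q ^ b)) •
        redQuot (p ^ a * q ^ b) (q ^ b) n (dvd_mul_left _ _) x.1)
    have hzC : z ∈ C := (hC z).mpr ⟨by rw [hz1]; exact C₁.zero_mem, by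
        rw [hz2]
        exact Submodule.smul_mem (C₂.restrictScalars (ZMod (q ^ b))) _ ((hC x.1).mp x.2).2⟩
    refine ⟨⟨z, hzC⟩, Subtype.ext ?_⟩
    rw [Submodule.coe_smul]
    have hdiff : x.1 - ((p ^ a : ℕ) : ZMod (p ^ a * q ^ b)) • z = 0 := by
      apply quot_inj n hp hq hpq
      · rw [map_sub, redQuot_smul, hz1, smul_zero, hx0, sub_zero]
      · rw [map_sub, redQuot_smul, hz2, smul_smul, map_natCast,
          ← ZMod.coe_unitOfCoprime (p ^ a) hco, ← hU, ← Units.val_mul, mul_inv_cancel,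
          Units.val_one, one_smul, sub_self]
    exact sub_eq_zero.mp hdiff
  obtain ⟨b₁⟩ := basis_transfer (ZMod.castHom (dvd_mul_right (p ^ a) (q ^ b)) (ZMod (p ^ a)))
    (castHom_surj _ _ _) F₁ hsmul₁ Fsurj₁ _ (by rw [map_natCast, ZMod.natCast_self]) hker₁ b0
  have h1 := finrank_eq_of_basis_pair b₁ b0
  have h2 := finrank_eq_of_basis_pair b₂ b0
  exact hr (by rw [← hrank₁, ← hrank₂, h1, h2])
end

section
/- Let p be a prime, s ≥ 1, and n coprime to p. Every ideal C of ℤ_{p^s}[x]/⟨x^n − 1⟩ admits a generating set of the form {f_0, p f_1, …, p^{s-1} f_{s-1}} where each f_i is a monic polynomial and f_{s-1} | f_{s-2} | ⋯ | f_1 | f_0 | x^n − 1 in ℤ_{p^s}[x]. -/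
open Polynomial
namespace CyclicAux
variable {p s : ℕ}

theorem zmod_dvd_of_cast_eq_zero (hp : p.Prime) (hs : s ≠ 0) (x : ZMod (p ^ s))
    (hx : ZMod.castHom (dvd_pow_self p hs) (ZMod p) x = 0) : (p : ZMod (p ^ s)) ∣ x := by
  haveI : NeZero (p ^ s) := ⟨pow_ne_zero _ hp.ne_zero⟩
  have hval : ((x.val : ℕ) : ZMod p) = 0 := by
    rwa [ZMod.castHom_apply, ← ZMod.natCast_val] at hx
  obtain ⟨m, hm⟩ := (ZMod.natCast_eq_zero_iff _ _).mp hval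
  refine ⟨(m : ZMod (p ^ s)), ?_⟩
  have : ((x.val : ℕ) : ZMod (p ^ s)) = x := ZMod.natCast_rightInverse x
  rw [← this, hm]; push_cast; ring

theorem poly_dvd_of_map_eq_zero (hp : p.Prime) (hs : s ≠ 0) (d : (ZMod (p ^ s))[X])
    (hd : d.map (ZMod.castHom (dvd_pow_self p hs) (ZMod p)) = 0) :
    (C ((p : ℕ) : ZMod (p ^ s))) ∣ d := by
  rw [C_dvd_iff_dvd_coeff]
  intro i
  apply zmod_dvd_of_cast_eq_zero hp hs
  have := congrArg (fun q => Polynomial.coeff q i) hd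
  simpa [coeff_map] using this

theorem C_p_pow_s_eq_zero : (C ((p : ℕ) : ZMod (p ^ s))) ^ s = 0 := by
  rw [← map_pow]
  have : ((p : ℕ) : ZMod (p ^ s)) ^ s = 0 := by
    rw [← Nat.cast_pow, ZMod.natCast_self]
  rw [this, map_zero]

theorem nilpotent_of_map_eq_zero (hp : p.Prime) (hs : s ≠ 0) (d : (ZMod (p ^ s))[X])
    (hd : d.map (ZMod.castHom (dvd_pow_self p hs) (ZMod p)) = 0) : IsNilpotent d := by
  obtain ⟨r, rfl⟩ := poly_dvd_of_map_eq_zero hp hs d hd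
  exact ⟨s, by rw [mul_pow, C_p_pow_s_eq_zero, zero_mul]⟩

theorem isCoprime_of_map (hp : p.Prime) (hs : s ≠ 0) (a b : (ZMod (p ^ s))[X])
    (h : IsCoprime (a.map (ZMod.castHom (dvd_pow_self p hs) (ZMod p)))
      (b.map (ZMod.castHom (dvd_pow_self p hs) (ZMod p)))) : IsCoprime a b := by
  set φ := ZMod.castHom (dvd_pow_self p hs) (ZMod p)
  obtain ⟨u', v', huv⟩ := h
  obtain ⟨u, hu⟩ := Polynomial.map_surjective φ (ZMod.ringHom_surjective φ) u'
  obtain ⟨v, hv⟩ := Polynomial.map_surjective φ (ZMod.ringHom_surjective φ) v'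
  have hker : (1 - (u * a + v * b)).map φ = 0 := by
    simp [Polynomial.map_add, Polynomial.map_mul, hu, hv, huv]
  have hnil : IsNilpotent (1 - (u * a + v * b)) := nilpotent_of_map_eq_zero hp hs _ hker
  have hunit : IsUnit (u * a + v * b) := by
    have := hnil.isUnit_one_sub
    simpa using this
  obtain ⟨w, hw⟩ := hunit.exists_left_inv
  exact ⟨w * u, w * v, by rw [mul_assoc, mul_assoc, ← mul_add, hw]⟩

theorem exists_factor_C (u : ZMod (p ^ s)) (d : (ZMod (p ^ s))[X])
    (h : ∀ k, u ∣ d.coeff k) : ∃ c, d = C u * c ∧ c.degree ≤ d.degree := by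
  classical
  choose y hy using h
  refine ⟨∑ k ∈ d.support, C (y k) * X ^ k, ?_, ?_⟩
  · ext m
    rw [coeff_C_mul, finset_sum_coeff]
    simp only [coeff_C_mul_X_pow]
    rw [Finset.sum_ite_eq d.support m y]
    by_cases hm : m ∈ d.support
    · rw [if_pos hm, ← hy m]
    · rw [if_neg hm]
      simpa using (Polynomial.notMem_support_iff.mp hm)
  · refine Polynomial.degree_le_iff_coeff_zero _ _ |>.mpr fun m hm => ?_
    have hdm : d.coeff m = 0 := coeff_eq_zero_of_degree_lt hm
    rw [finset_sum_coeff]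
    apply Finset.sum_eq_zero
    intro k hk
    rw [coeff_C_mul_X_pow]
    have : m ≠ k := by
      rintro rfl
      exact (Polynomial.mem_support_iff.mp hk) hdm
    rw [if_neg this]

/-- a map-zero polynomial is `C p` times something of no larger degree -/
theorem exists_factor_p (hp : p.Prime) (hs : s ≠ 0) (d : (ZMod (p ^ s))[X])
    (hd : d.map (ZMod.castHom (dvd_pow_self p hs) (ZMod p)) = 0) :
    ∃ c, d = C ((p : ℕ) : ZMod (p ^ s)) * c ∧ c.degree ≤ d.degree := by
  apply exists_factor_C
  intro k
  apply zmod_dvd_of_cast_eq_zero hp hs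
  have := congrArg (fun q => Polynomial.coeff q k) hd
  simpa [coeff_map] using this

theorem hensel_factor (hp : p.Prime) (hs : s ≠ 0) (h : (ZMod (p ^ s))[X]) (hmon : h.Monic)
    (A B : (ZMod p)[X]) (hA : A.Monic) (hB : B.Monic) (hcop : IsCoprime A B)
    (hfac : h.map (ZMod.castHom (dvd_pow_self p hs) (ZMod p)) = A * B) :
    ∃ a b : (ZMod (p ^ s))[X], a.Monic ∧ b.Monic ∧ h = a * b ∧
      a.map (ZMod.castHom (dvd_pow_self p hs) (ZMod p)) = A ∧
      b.map (ZMod.castHom (dvd_pow_self p hs) (ZMod p)) = B := by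
  classical
  haveI : Fact p.Prime := ⟨hp⟩
  haveI : Fact (1 < p ^ s) := ⟨Nat.one_lt_pow hs hp.one_lt⟩
  set φ := ZMod.castHom (dvd_pow_self p hs) (ZMod p) with hφdef
  set P : (ZMod (p ^ s))[X] := C ((p : ℕ) : ZMod (p ^ s)) with hPdef
  have hφP : P.map φ = 0 := by
    rw [hPdef, Polynomial.map_C, map_natCast]
    simp [ZMod.natCast_self]
  have hmapsurj := Polynomial.map_surjective φ (ZMod.ringHom_surjective φ)
  have hdegAB : A.degree + B.degree = h.degree := by
    rw [← degree_mul, ← hfac, hmon.degree_map]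
  have hAbot : A.degree ≠ ⊥ := by
    rw [Ne, degree_eq_bot]; exact hA.ne_zero
  have hBbot : B.degree ≠ ⊥ := by
    rw [Ne, degree_eq_bot]; exact hB.ne_zero
  have key : ∀ t : ℕ, ∃ a b c : (ZMod (p ^ s))[X], a.Monic ∧ b.Monic ∧
      a.map φ = A ∧ b.map φ = B ∧ h - a * b = P ^ (t + 1) * c ∧ c.degree < h.degree := by
    intro t
    induction t with
    | zero =>
        obtain ⟨a, hamap, hadeg, hamon⟩ :=
          lifts_and_degree_eq_and_monic ((mem_lifts A).mpr (hmapsurj A)) hA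
        obtain ⟨b, hbmap, hbdeg, hbmon⟩ :=
          lifts_and_degree_eq_and_monic ((mem_lifts B).mpr (hmapsurj B)) hB
        have hd0 : (h - a * b).map φ = 0 := by
          rw [Polynomial.map_sub, Polynomial.map_mul, hamap, hbmap, hfac, sub_self]
        obtain ⟨c, hc, hcdeg⟩ := exists_factor_p hp hs _ hd0
        refine ⟨a, b, c, hamon, hbmon, hamap, hbmap, by rw [pow_one, hPdef]; exact hc, ?_⟩
        refine lt_of_le_of_lt hcdeg ?_
        have habdeg : (a * b).degree = h.degree := by
          rw [hbmon.degree_mul, hadeg, hbdeg, hdegAB]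
        refine degree_sub_lt habdeg.symm hmon.ne_zero ?_
        rw [hmon.leadingCoeff, (hamon.mul hbmon).leadingCoeff]
    | succ t ih =>
        obtain ⟨a, b, c, hamon, hbmon, hamap, hbmap, hab, hcdeg⟩ := ih
        set cb := c.map φ with hcbdef
        obtain ⟨U, V, hUV⟩ := hcop
        set δA := (V * cb) %ₘ A with hδAdef
        set Q := (V * cb) /ₘ A with hQdef
        set δB := U * cb + B * Q with hδBdef
        have hδAeq : δA = V * cb - A * Q := by
          have h1 : δA + A * Q = V * cb := modByMonic_add_div _ _
          linear_combination h1
        have hid : B * δA + A * δB = cb := by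
          rw [hδAeq, hδBdef]
          linear_combination cb * hUV
        have hdegδA : δA.degree < A.degree := degree_modByMonic_lt _ hA
        have hcbdeg : cb.degree < A.degree + B.degree := by
          rw [hdegAB]
          exact lt_of_le_of_lt degree_map_le hcdeg
        have hdegδB : δB.degree < B.degree := by
          by_cases hz : δB = 0
          · rw [hz, degree_zero]
            exact Ne.bot_lt hBbot
          have h2 : (A * δB).degree < A.degree + B.degree := by
            have h3 : A * δB = cb - B * δA := by linear_combination hid
            rw [h3]
            refine lt_of_le_of_lt (degree_sub_le _ _) (max_lt hcbdeg ?_)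
            refine lt_of_le_of_lt (degree_mul_le _ _) ?_
            rw [add_comm A.degree B.degree]
            exact WithBot.add_lt_add_left hBbot hdegδA
          rw [degree_mul] at h2
          exact (WithBot.add_lt_add_iff_left hAbot).mp h2
        obtain ⟨da, hdamap, hdadeg⟩ := mem_lifts_and_degree_eq ((mem_lifts δA).mpr (hmapsurj δA))
        obtain ⟨db, hdbmap, hdbdeg⟩ := mem_lifts_and_degree_eq ((mem_lifts δB).mpr (hmapsurj δB))
        have hadeg : a.degree = A.degree := by rw [← hamap, hamon.degree_map]
        have hbdeg : b.degree = B.degree := by rw [← hbmap, hbmon.degree_map]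
        have hPpow : (P ^ (t + 1)).degree ≤ 0 := by
          rw [hPdef, ← map_pow]
          exact degree_C_le
        have hPmul : ∀ q : (ZMod (p ^ s))[X], (P ^ (t + 1) * q).degree ≤ q.degree := by
          intro q
          refine le_trans (degree_mul_le _ _) ?_
          calc (P ^ (t + 1)).degree + q.degree ≤ 0 + q.degree :=
                add_le_add_left hPpow _
            _ = q.degree := zero_add _
        have hamon' : (a + P ^ (t + 1) * da).Monic := by
          refine hamon.add_of_left ?_
          refine lt_of_le_of_lt (hPmul da) ?_
          rw [hdadeg, hadeg]
          exact hdegδA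
        have hbmon' : (b + P ^ (t + 1) * db).Monic := by
          refine hbmon.add_of_left ?_
          refine lt_of_le_of_lt (hPmul db) ?_
          rw [hdbdeg, hbdeg]
          exact hdegδB
        have hPmap : (P ^ (t + 1)).map φ = 0 := by
          rw [Polynomial.map_pow, hφP, zero_pow (Nat.succ_ne_zero _)]
        have hamap' : (a + P ^ (t + 1) * da).map φ = A := by
          rw [Polynomial.map_add, Polynomial.map_mul, hPmap, zero_mul, add_zero, hamap]
        have hbmap' : (b + P ^ (t + 1) * db).map φ = B := by
          rw [Polynomial.map_add, Polynomial.map_mul, hPmap, zero_mul, add_zero, hbmap]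
        set c'' := c - (a * db + b * da) - P ^ (t + 1) * (da * db) with hc''def
        have hc''map : c''.map φ = 0 := by
          rw [hc''def, Polynomial.map_sub, Polynomial.map_sub, Polynomial.map_add,
            Polynomial.map_mul, Polynomial.map_mul, Polynomial.map_mul, hPmap,
            hamap, hbmap, hdamap, hdbmap, zero_mul, sub_zero, ← hcbdef]
          linear_combination -hid
        obtain ⟨c', hc', hc'deg⟩ := exists_factor_p hp hs c'' hc''map
        refine ⟨a + P ^ (t + 1) * da, b + P ^ (t + 1) * db, c',
          hamon', hbmon', hamap', hbmap', ?_, ?_⟩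
        · have hmain : h - (a + P ^ (t + 1) * da) * (b + P ^ (t + 1) * db)
              = P ^ (t + 1) * c'' := by
            rw [hc''def]
            linear_combination hab
          rw [hmain, hc', ← hPdef, ← mul_assoc, ← pow_succ]
        · refine lt_of_le_of_lt hc'deg ?_
          rw [hc''def]
          have hp1 : c.degree < h.degree := hcdeg
          have hp2 : (a * db).degree < h.degree := by
            refine lt_of_le_of_lt (degree_mul_le _ _) ?_
            rw [hadeg, hdbdeg, ← hdegAB]
            exact WithBot.add_lt_add_left hAbot hdegδB
          have hp3 : (b * da).degree < h.degree := by
            refine lt_of_le_of_lt (degree_mul_le _ _) ?_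
            rw [hbdeg, hdadeg, ← hdegAB, add_comm A.degree B.degree]
            exact WithBot.add_lt_add_left hBbot hdegδA
          have hp4 : (P ^ (t + 1) * (da * db)).degree < h.degree := by
            refine lt_of_le_of_lt (hPmul _) ?_
            refine lt_of_le_of_lt (degree_mul_le _ _) ?_
            rw [hdadeg, hdbdeg, ← hdegAB]
            calc δA.degree + δB.degree ≤ A.degree + δB.degree :=
                  add_le_add_left hdegδA.le _
              _ < A.degree + B.degree := WithBot.add_lt_add_left hAbot hdegδB
          refine lt_of_le_of_lt (degree_sub_le _ _) (max_lt ?_ hp4)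
          refine lt_of_le_of_lt (degree_sub_le _ _) (max_lt hp1 ?_)
          exact lt_of_le_of_lt (degree_add_le _ _) (max_lt hp2 hp3)
  obtain ⟨a, b, c, hamon, hbmon, hamap, hbmap, hab, -⟩ := key (s - 1)
  have hs1 : s - 1 + 1 = s := Nat.succ_pred_eq_of_pos (Nat.pos_of_ne_zero hs)
  have : P ^ s = 0 := by rw [hPdef]; exact C_p_pow_s_eq_zero
  rw [hs1, this, zero_mul, sub_eq_zero] at hab
  exact ⟨a, b, hamon, hbmon, hab, hamap, hbmap⟩

theorem sep_X_pow_sub_one (hp : p.Prime) {n : ℕ} (hn : Nat.Coprime n p) :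
    ((X : (ZMod p)[X]) ^ n - 1).Separable := by
  haveI : Fact p.Prime := ⟨hp⟩
  have h1 : ((n : ZMod p)) ≠ 0 := by
    rw [Ne, ZMod.natCast_eq_zero_iff]
    exact (Nat.Prime.coprime_iff_not_dvd hp).mp hn.symm
  have := Polynomial.separable_X_pow_sub_C (1 : ZMod p) h1 one_ne_zero
  simpa using this

theorem exists_monic_generator (hp : p.Prime) (I : Ideal (ZMod p)[X])
    (m : (ZMod p)[X]) (hm : m.Monic) (hmI : m ∈ I) :
    ∃ g : (ZMod p)[X], g.Monic ∧ I = Ideal.span {g} ∧ g ∣ m := by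
  haveI : Fact p.Prime := ⟨hp⟩
  obtain ⟨g0, hg0⟩ := (IsPrincipalIdealRing.principal I).principal
  have hg0' : I = Ideal.span {g0} := hg0
  have hmg0 : g0 ∣ m := by
    rw [← Ideal.mem_span_singleton, ← hg0']
    exact hmI
  have hg0ne : g0 ≠ 0 := by
    rintro rfl
    exact hm.ne_zero (zero_dvd_iff.mp hmg0)
  refine ⟨g0 * Polynomial.C (g0.leadingCoeff)⁻¹, monic_mul_leadingCoeff_inv hg0ne, ?_, ?_⟩
  · rw [hg0', Ideal.span_singleton_mul_right_unit]
    exact isUnit_C.mpr (IsUnit.mk0 _ (inv_ne_zero (leadingCoeff_ne_zero.mpr hg0ne)))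
  · exact ((isUnit_C.mpr (IsUnit.mk0 _ (inv_ne_zero
      (leadingCoeff_ne_zero.mpr hg0ne)))).mul_right_dvd).mpr hmg0

theorem map_X_pow_sub_one (hs : s ≠ 0) {n : ℕ} :
    ((X : (ZMod (p ^ s))[X]) ^ n - 1).map (ZMod.castHom (dvd_pow_self p hs) (ZMod p))
      = (X : (ZMod p)[X]) ^ n - 1 := by
  rw [Polynomial.map_sub, Polynomial.map_pow, Polynomial.map_X, Polynomial.map_one]

theorem chain_lift (hp : p.Prime) (hs : s ≠ 0) {n : ℕ} (hn : n ≠ 0)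
    (hsep : ((X : (ZMod p)[X]) ^ n - 1).Separable)
    (G : ℕ → (ZMod p)[X]) (hGm : ∀ i, (G i).Monic)
    (hG0 : G 0 ∣ (X : (ZMod p)[X]) ^ n - 1) (hGchain : ∀ i, G (i + 1) ∣ G i) :
    ∃ f : ℕ → (ZMod (p ^ s))[X], (∀ i, (f i).Monic) ∧
      (∀ i, (f i).map (ZMod.castHom (dvd_pow_self p hs) (ZMod p)) = G i) ∧
      (∀ i, f i ∣ (X : (ZMod (p ^ s))[X]) ^ n - 1) ∧ (∀ i, f (i + 1) ∣ f i) := by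
  classical
  set φ := ZMod.castHom (dvd_pow_self p hs) (ZMod p) with hφdef
  set M : (ZMod (p ^ s))[X] := X ^ n - 1 with hMdef
  have hMmon : M.Monic := by
    have := monic_X_pow_sub_C (1 : ZMod (p ^ s)) hn
    simpa [hMdef] using this
  have hMmap : M.map φ = (X : (ZMod p)[X]) ^ n - 1 := map_X_pow_sub_one hs
  -- base
  obtain ⟨T0, hT0⟩ := hG0
  have hT0m : T0.Monic := (hGm 0).of_mul_monic_left (by rw [← hT0]; exact monic_X_pow_sub_C _ hn)
  have hcop0 : IsCoprime (G 0) T0 := (hsep.of_dvd (dvd_of_eq hT0.symm)).isCoprime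
  obtain ⟨f0, e0, hf0m, he0m, hMf0, hf0map, -⟩ :=
    hensel_factor hp hs M hMmon (G 0) T0 (hGm 0) hT0m hcop0 (by rw [hMmap, hT0])
  have hf0dvd : f0 ∣ M := Dvd.intro _ hMf0.symm
  -- step
  have step : ∀ (i : ℕ) (fi : (ZMod (p ^ s))[X]), fi.Monic → fi.map φ = G i → fi ∣ M →
      ∃ f', f'.Monic ∧ f'.map φ = G (i + 1) ∧ f' ∣ fi := by
    intro i fi hmon hmap hdvd
    obtain ⟨T, hT⟩ := hGchain i
    have hTm : T.Monic := (hGm (i + 1)).of_mul_monic_left (by rw [← hT]; exact hGm i)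
    have hGidvd : G i ∣ (X : (ZMod p)[X]) ^ n - 1 := by
      rw [← hmap, ← hMmap]
      exact Polynomial.map_dvd φ hdvd
    have hcop : IsCoprime (G (i + 1)) T :=
      (hsep.of_dvd (dvd_trans (dvd_of_eq hT.symm) hGidvd)).isCoprime
    obtain ⟨a, b, ham, hbm, hfab, hamap, -⟩ :=
      hensel_factor hp hs fi hmon (G (i + 1)) T (hGm (i + 1)) hTm hcop (by rw [hmap, hT])
    exact ⟨a, ham, hamap, Dvd.intro _ hfab.symm⟩
  choose stepF h1 h2 h3 using step
  let F : ∀ i : ℕ, {v : (ZMod (p ^ s))[X] // v.Monic ∧ v.map φ = G i ∧ v ∣ M} := fun i =>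
    Nat.rec (motive := fun i => {v : (ZMod (p ^ s))[X] // v.Monic ∧ v.map φ = G i ∧ v ∣ M})
      ⟨f0, hf0m, hf0map, hf0dvd⟩
      (fun k prev => ⟨stepF k prev.1 prev.2.1 prev.2.2.1 prev.2.2.2,
        h1 k prev.1 prev.2.1 prev.2.2.1 prev.2.2.2,
        h2 k prev.1 prev.2.1 prev.2.2.1 prev.2.2.2,
        (h3 k prev.1 prev.2.1 prev.2.2.1 prev.2.2.2).trans prev.2.2.2⟩) i
  refine ⟨fun i => (F i).1, fun i => (F i).2.1, fun i => (F i).2.2.1, fun i => (F i).2.2.2,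
    fun i => ?_⟩
  exact h3 i (F i).1 (F i).2.1 (F i).2.2.1 (F i).2.2.2

theorem ideal_standard_gens (hp : p.Prime) (hs : s ≠ 0) {n : ℕ} (hn : Nat.Coprime n p)
    (J : Ideal (ZMod (p ^ s))[X]) (hXJ : (X : (ZMod (p ^ s))[X]) ^ n - 1 ∈ J) :
    ∃ f : ℕ → (ZMod (p ^ s))[X], (∀ i, (f i).Monic) ∧ (∀ i, f (i + 1) ∣ f i) ∧
      f 0 ∣ (X : (ZMod (p ^ s))[X]) ^ n - 1 ∧
      J = Ideal.span (Set.range fun i : Fin s =>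
        Polynomial.C ((p : ZMod (p ^ s))) ^ (i : ℕ) * f (i : ℕ)) := by
  classical
  have hn0 : n ≠ 0 := by
    rintro rfl
    exact hp.one_lt.ne' ((Nat.coprime_zero_left p).mp hn)
  set φ := ZMod.castHom (dvd_pow_self p hs) (ZMod p) with hφdef
  set M : (ZMod (p ^ s))[X] := X ^ n - 1 with hMdef
  set PC : (ZMod (p ^ s))[X] := Polynomial.C ((p : ZMod (p ^ s))) with hPCdef
  let tor : ℕ → Ideal (ZMod (p ^ s))[X] := fun i => J.colon (Ideal.span {PC ^ i})
  have hmem : ∀ (i : ℕ) (g : (ZMod (p ^ s))[X]), g ∈ tor i ↔ PC ^ i * g ∈ J := by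
    intro i g
    have h1 : g ∈ tor i ↔ g * PC ^ i ∈ J := Ideal.mem_colon_span_singleton
    rw [h1, mul_comm]
  have hMtor : ∀ i, M ∈ tor i := by
    intro i
    rw [hmem]
    exact Ideal.mul_mem_left _ _ hXJ
  have htorle : ∀ i, tor i ≤ tor (i + 1) := by
    intro i g hg
    rw [hmem] at hg ⊢
    have h2 : PC ^ (i + 1) * g = PC * (PC ^ i * g) := by ring
    rw [h2]
    exact Ideal.mul_mem_left _ _ hg
  set Φ := Polynomial.mapRingHom φ with hΦdef
  have hΦsurj : Function.Surjective ⇑Φ :=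
    Polynomial.map_surjective φ (ZMod.ringHom_surjective φ)
  let Ibar : ℕ → Ideal (ZMod p)[X] := fun i => (tor i).map Φ
  have hXbar : Φ M = (X : (ZMod p)[X]) ^ n - 1 := map_X_pow_sub_one hs
  have hgen : ∀ i, ∃ g : (ZMod p)[X], g.Monic ∧ Ibar i = Ideal.span {g} ∧
      g ∣ (X : (ZMod p)[X]) ^ n - 1 := by
    intro i
    refine exists_monic_generator hp _ _ (monic_X_pow_sub_C _ hn0) ?_
    rw [← hXbar]
    exact Ideal.mem_map_of_mem Φ (hMtor i)
  choose G hGm hGspan hGdvd using hgen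
  have hGchain : ∀ i, G (i + 1) ∣ G i := by
    intro i
    rw [← Ideal.span_singleton_le_span_singleton, ← hGspan, ← hGspan]
    exact Ideal.map_mono (htorle i)
  have hsep := sep_X_pow_sub_one hp hn
  obtain ⟨f, hfm, hfmap, hfdvd, hfchain⟩ := chain_lift hp hs hn0 hsep G hGm (hGdvd 0) hGchain
  have hftor : ∀ i, f i ∈ tor i := by
    intro i
    obtain ⟨e, he⟩ := hfdvd i
    have hGIbar : G i ∈ Ibar i := by
      rw [hGspan i]; exact Ideal.mem_span_singleton_self _
    obtain ⟨g, hgmem, hgmap⟩ := (Ideal.mem_map_iff_of_surjective Φ hΦsurj).mp hGIbar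
    have hgmap' : g.map φ = G i := hgmap
    have hcopbar : IsCoprime (G i) (e.map φ) := by
      have hfe : G i * e.map φ = (X : (ZMod p)[X]) ^ n - 1 := by
        rw [← hfmap i, ← Polynomial.map_mul, ← he]
        exact map_X_pow_sub_one hs
      exact (hsep.of_dvd (dvd_of_eq hfe)).isCoprime
    have hcop : IsCoprime (f i) e :=
      isCoprime_of_map hp hs _ _ (by rw [hfmap i]; exact hcopbar)
    obtain ⟨α, β, hαβ⟩ := hcop
    have hκmap : (g - f i).map φ = 0 := by
      rw [Polynomial.map_sub, hgmap', hfmap i, sub_self]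
    have hκnil : IsNilpotent ((g - f i) * α) := by
      obtain ⟨k, hk⟩ := nilpotent_of_map_eq_zero hp hs _ hκmap
      exact ⟨k, by rw [mul_pow, hk, zero_mul]⟩
    have hkey : f i * (1 + (g - f i) * α) ∈ tor i := by
      have expand : f i * (1 + (g - f i) * α) = (1 - β * e) * g + β * M := by
        linear_combination (g - f i) * hαβ - β * he
      rw [expand]
      exact Ideal.add_mem _ (Ideal.mul_mem_left _ _ hgmem)
        (Ideal.mul_mem_left _ _ (hMtor i))
    have hu : IsUnit (1 + (g - f i) * α) := hκnil.isUnit_one_add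
    obtain ⟨w, hw⟩ := hu.exists_right_inv
    have hfi : f i = f i * (1 + (g - f i) * α) * w := by
      rw [mul_assoc, hw, mul_one]
    rw [hfi]
    exact Ideal.mul_mem_right _ _ hkey
  refine ⟨f, hfm, hfchain, hfdvd 0, ?_⟩
  refine le_antisymm ?_ ?_
  · -- J ≤ span
    have main : ∀ k, k ≤ s → ∀ g : (ZMod (p ^ s))[X], g ∈ tor (s - k) →
        PC ^ (s - k) * g ∈ Ideal.span (Set.range fun i : Fin s =>
          PC ^ (i : ℕ) * f (i : ℕ)) := by
      intro k
      induction k with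
      | zero =>
          intro _ g hg
          have h0 : PC ^ (s - 0) = 0 := by
            rw [Nat.sub_zero, hPCdef]
            exact C_p_pow_s_eq_zero
          rw [h0, zero_mul]
          exact Ideal.zero_mem _
      | succ k ih =>
          intro hk g hg
          have hik : s - (k + 1) + 1 = s - k := by omega
          have hilt : s - (k + 1) < s := by omega
          set i := s - (k + 1) with hidef
          have hGdvdg : G i ∣ g.map φ := by
            rw [← Ideal.mem_span_singleton, ← hGspan]
            exact Ideal.mem_map_of_mem Φ hg
          obtain ⟨T, hT⟩ := hGdvdg
          obtain ⟨t, ht⟩ := Polynomial.map_surjective φ (ZMod.ringHom_surjective φ) T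
          have hker : (g - f i * t).map φ = 0 := by
            rw [Polynomial.map_sub, Polynomial.map_mul, hfmap i, ht, ← hT, sub_self]
          obtain ⟨r, hr⟩ := poly_dvd_of_map_eq_zero hp hs _ hker
          have hrtor : r ∈ tor (i + 1) := by
            rw [hmem]
            have heq : PC ^ (i + 1) * r = PC ^ i * g - PC ^ i * (f i * t) := by
              rw [pow_succ]
              linear_combination (-(PC ^ i)) * hr
            rw [heq]
            exact Ideal.sub_mem _ ((hmem i g).mp hg)
              ((hmem i _).mp (Ideal.mul_mem_right _ _ (hftor i)))
          have hr' := ih (by omega) r (hik ▸ hrtor)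
          have hsplit : PC ^ i * g = (PC ^ i * f i) * t + PC ^ (i + 1) * r := by
            rw [pow_succ]
            linear_combination (PC ^ i) * hr
          rw [hsplit]
          refine Ideal.add_mem _ ?_ (hik ▸ hr')
          exact Ideal.mul_mem_right _ _ (Ideal.subset_span ⟨⟨i, hilt⟩, rfl⟩)
    intro g hg
    have hg0 : g ∈ tor 0 := by
      rw [hmem, pow_zero, one_mul]
      exact hg
    have hfin := main s le_rfl g (by rwa [Nat.sub_self])
    rwa [Nat.sub_self, pow_zero, one_mul] at hfin
  · -- span ≤ J
    rw [Ideal.span_le]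
    rintro _ ⟨i, rfl⟩
    exact (hmem (i : ℕ) (f (i : ℕ))).mp (hftor _)

end CyclicAux

/-- every ideal `C` of `ℤ_{p^s}[x]/⟨x^n − 1⟩` (with `p` prime, `s ≥ 1`,
`gcd(n,p) = 1`) admits a generating set `{f_0, p f_1, …, p^{s-1} f_{s-1}}` with each `f_i`
monic and `f_{s-1} ∣ ⋯ ∣ f_1 ∣ f_0 ∣ x^n − 1` in `ℤ_{p^s}[x]`. -/
theorem cyclic_code_standard_generators (p s n : ℕ) (hp : p.Prime) (hs : 0 < s)
    (hn : Nat.Coprime n p)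
    (C : Ideal (Polynomial (ZMod (p ^ s)) ⧸
      (Ideal.span {(X : Polynomial (ZMod (p ^ s))) ^ n - 1}))) :
    ∃ f : Fin s → Polynomial (ZMod (p ^ s)),
      (∀ i, (f i).Monic) ∧
      (∀ i j : Fin s, i ≤ j → f j ∣ f i) ∧
      f ⟨0, hs⟩ ∣ (X : Polynomial (ZMod (p ^ s))) ^ n - 1 ∧
      C = Ideal.span (Set.range fun i : Fin s =>
        Ideal.Quotient.mk _ ((Polynomial.C ((p : ZMod (p ^ s)))) ^ (i : ℕ) * f i)) := by
  classical
  have hs' : s ≠ 0 := hs.ne'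
  set mk := Ideal.Quotient.mk (Ideal.span {(X : Polynomial (ZMod (p ^ s))) ^ n - 1}) with hmkdef
  have hXJ : (X : Polynomial (ZMod (p ^ s))) ^ n - 1 ∈ Ideal.comap mk C := by
    rw [Ideal.mem_comap]
    have h0 : mk ((X : Polynomial (ZMod (p ^ s))) ^ n - 1) = 0 :=
      Ideal.Quotient.eq_zero_iff_mem.mpr (Ideal.mem_span_singleton_self _)
    rw [h0]
    exact C.zero_mem
  obtain ⟨f, hfm, hfchain, hf0, hJ⟩ := CyclicAux.ideal_standard_gens hp hs' hn (Ideal.comap mk C) hXJ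
  have hchainN : ∀ a b : ℕ, a ≤ b → f b ∣ f a := by
    intro a b hab
    induction b, hab using Nat.le_induction with
    | base => exact dvd_rfl
    | succ b hb ih => exact (hfchain b).trans ih
  refine ⟨fun i : Fin s => f (i : ℕ), fun i => hfm _, fun i j hij => hchainN _ _ hij,
    hf0, ?_⟩
  have hC : Ideal.map mk (Ideal.comap mk C) = C :=
    Ideal.map_comap_of_surjective mk Ideal.Quotient.mk_surjective C
  rw [← hC, hJ, Ideal.map_span, ← Set.range_comp]
  rfl
end
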